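/- For any θ, ν ∈ S¹ and any h ∈ [h_min, 1] (with h_min ≤ 1): (i) E_{(θ,h)(ν,h)} = E_{(ν,h)(θ,h)} or E_{(θ,h)(ν,h)} = −E_{(ν,h)(θ,h)}; and (ii) both E_{(θ,h)(ν,h)} and E_{(θ,h)} belong to the matrix class ℰ_{1/8, h_min^{−1}}, i.e. each such matrix E satisfies |det(E)| ≤ h_min^{−1} and |E|_∞ ≤ (√(1/4))^{−1}|det(E)| = 2|det(E)|. -/

import Mathlib

open Real

noncomputable section

namespace SingleIndex

/-- Inner product of two points of `ℝ²`. -/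
def dot2 (a b : Fin 2 → ℝ) : ℝ := a 0 * b 0 + a 1 * b 1

/-- The unit circle `S¹ ⊂ ℝ²`. -/
def S1 : Set (Fin 2 → ℝ) := {θ | θ 0 ^ 2 + θ 1 ^ 2 = 1}

/-- The matrix `E_{(θ,h)}`. -/
def Emat (θ : Fin 2 → ℝ) (h : ℝ) : Matrix (Fin 2) (Fin 2) ℝ :=
  !![θ 0 / h, θ 1 / h; -θ 1, θ 0]

/-- The matrix `Ē_{(θ,h)(ν,h)}`. -/
def Ebar (θ ν : Fin 2 → ℝ) (h : ℝ) : Matrix (Fin 2) (Fin 2) ℝ :=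
  !![(θ 0 + ν 0) / (2 * h * (1 + |dot2 ν θ|)), (θ 1 + ν 1) / (2 * h * (1 + |dot2 ν θ|));
     -((θ 1 + ν 1) / (2 * (1 + |dot2 ν θ|))), (θ 0 + ν 0) / (2 * (1 + |dot2 ν θ|))]

/-- The matrix `E_{(θ,h)(ν,h)}` with the sign convention. -/
def Epair (θ ν : Fin 2 → ℝ) (h : ℝ) : Matrix (Fin 2) (Fin 2) ℝ :=
  if 0 ≤ dot2 ν θ then Ebar θ ν h else Ebar (-θ) ν h

/-- The matrix class `ℰ_{a,A}`: `|det E| ≤ A` and `|E|_∞ ≤ (√(2a))⁻¹ |det E|`. -/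
def Ecal (a A : ℝ) : Set (Matrix (Fin 2) (Fin 2) ℝ) :=
  {E | |E.det| ≤ A ∧ ∀ i j : Fin 2, |E i j| ≤ (Real.sqrt (2 * a))⁻¹ * |E.det|}

lemma sqrt_quarter : (Real.sqrt (2 * (1/8)))⁻¹ = 2 := by
  rw [show (2 * (1/8) : ℝ) = (1/2)^2 by norm_num, Real.sqrt_sq (by norm_num)]
  norm_num

lemma abs_le_one_of_S1 {θ : Fin 2 → ℝ} (hθ : θ ∈ S1) (i : Fin 2) : |θ i| ≤ 1 := by
  simp only [S1, Set.mem_setOf_eq] at hθ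
  have h0 : |θ 0| ≤ 1 := abs_le.mpr
    ⟨by nlinarith [sq_nonneg (θ 0 + 1), sq_nonneg (θ 1)],
     by nlinarith [sq_nonneg (θ 0 - 1), sq_nonneg (θ 1)]⟩
  have h1 : |θ 1| ≤ 1 := abs_le.mpr
    ⟨by nlinarith [sq_nonneg (θ 1 + 1), sq_nonneg (θ 0)],
     by nlinarith [sq_nonneg (θ 1 - 1), sq_nonneg (θ 0)]⟩
  fin_cases i
  · exact h0
  · exact h1

lemma Ebar_det {θ ν : Fin 2 → ℝ} (hθ : θ ∈ S1) (hν : ν ∈ S1) {h : ℝ} (h0 : 0 < h)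
    (hd : 0 ≤ dot2 ν θ) :
    (Ebar θ ν h).det = 1 / (2 * h * (1 + dot2 ν θ)) := by
  have hd1 : (0:ℝ) < 1 + dot2 ν θ := by linarith
  simp only [S1, Set.mem_setOf_eq] at hθ hν
  simp only [Ebar, Matrix.det_fin_two_of]
  rw [abs_of_nonneg hd]
  simp only [dot2] at hd1 ⊢
  field_simp
  have hD : (1 + (θ 0 * ν 0 + ν 1 * θ 1)) ≠ 0 := ne_of_gt (by linarith)
  rw [div_eq_div_iff (pow_ne_zero 2 hD) hD]
  linear_combination (1 + (θ 0 * ν 0 + ν 1 * θ 1)) * (hθ + hν)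

lemma Ebar_mem {hMin : ℝ} (hMin0 : 0 < hMin) {θ ν : Fin 2 → ℝ}
    (hθ : θ ∈ S1) (hν : ν ∈ S1) {h : ℝ} (hhl : hMin ≤ h) (hh1 : h ≤ 1)
    (hd : 0 ≤ dot2 ν θ) : Ebar θ ν h ∈ Ecal (1/8) hMin⁻¹ := by
  have h0 : 0 < h := lt_of_lt_of_le hMin0 hhl
  have hd1 : (0:ℝ) < 1 + dot2 ν θ := by linarith
  have hdet := Ebar_det hθ hν h0 hd
  have hdpos : 0 < 1 / (2 * h * (1 + dot2 ν θ)) := by positivity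
  have hθ0 := abs_le_one_of_S1 hθ 0
  have hθ1 := abs_le_one_of_S1 hθ 1
  have hν0 := abs_le_one_of_S1 hν 0
  have hν1 := abs_le_one_of_S1 hν 1
  constructor
  · rw [hdet, abs_of_pos hdpos, div_le_iff₀ (by positivity), inv_eq_one_div,
      div_mul_eq_mul_div, le_div_iff₀ hMin0]
    nlinarith
  · intro i j
    rw [sqrt_quarter, hdet, abs_of_pos hdpos]
    have habs : ∀ x : ℝ, |x| ≤ 2 → x / (2 * h * (1 + dot2 ν θ)) ≤
        2 * (1 / (2 * h * (1 + dot2 ν θ))) ∧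
        -(2 * (1 / (2 * h * (1 + dot2 ν θ)))) ≤ x / (2 * h * (1 + dot2 ν θ)) := by
      intro x hx
      rw [abs_le] at hx
      have hc : (0:ℝ) < 2 * h * (1 + dot2 ν θ) := by positivity
      constructor
      · rw [mul_one_div]
        exact (div_le_div_iff_of_pos_right hc).mpr hx.2
      · rw [mul_one_div, ← neg_div]
        exact (div_le_div_iff_of_pos_right hc).mpr (by linarith)
    have habs2 : ∀ x : ℝ, |x| ≤ 2 → x / (2 * (1 + dot2 ν θ)) ≤
        2 * (1 / (2 * h * (1 + dot2 ν θ))) ∧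
        -(2 * (1 / (2 * h * (1 + dot2 ν θ)))) ≤ x / (2 * (1 + dot2 ν θ)) := by
      intro x hx
      rw [abs_le] at hx
      have hc2 : (0:ℝ) < 2 * (1 + dot2 ν θ) := by positivity
      have key : 2 * (1 / (2 * h * (1 + dot2 ν θ))) = (2/h) / (2 * (1 + dot2 ν θ)) := by
        field_simp
      have h2h : (2:ℝ) ≤ 2 / h := by
        rw [le_div_iff₀ h0]; nlinarith
      rw [key]
      constructor
      · exact (div_le_div_iff_of_pos_right hc2).mpr (le_trans hx.2 h2h)
      · rw [← neg_div]
        exact (div_le_div_iff_of_pos_right hc2).mpr (by linarith)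
    have b0 : |θ 0 + ν 0| ≤ 2 := (abs_add_le _ _).trans (by linarith)
    have b1 : |θ 1 + ν 1| ≤ 2 := (abs_add_le _ _).trans (by linarith)
    fin_cases i <;> fin_cases j
    · show |(θ 0 + ν 0) / (2 * h * (1 + |dot2 ν θ|))| ≤ _
      rw [abs_of_nonneg hd]
      exact abs_le.mpr ⟨(habs _ b0).2, (habs _ b0).1⟩
    · show |(θ 1 + ν 1) / (2 * h * (1 + |dot2 ν θ|))| ≤ _
      rw [abs_of_nonneg hd]
      exact abs_le.mpr ⟨(habs _ b1).2, (habs _ b1).1⟩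
    · show |-((θ 1 + ν 1) / (2 * (1 + |dot2 ν θ|)))| ≤ _
      rw [abs_neg, abs_of_nonneg hd]
      exact abs_le.mpr ⟨(habs2 _ b1).2, (habs2 _ b1).1⟩
    · show |(θ 0 + ν 0) / (2 * (1 + |dot2 ν θ|))| ≤ _
      rw [abs_of_nonneg hd]
      exact abs_le.mpr ⟨(habs2 _ b0).2, (habs2 _ b0).1⟩

lemma neg_mem_S1 {θ : Fin 2 → ℝ} (hθ : θ ∈ S1) : -θ ∈ S1 := by
  simp only [S1, Set.mem_setOf_eq, Pi.neg_apply] at *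
  nlinarith

/-- for any `θ, ν ∈ S¹` and any `h ∈ [h_min, 1]` (with
`0 < h_min ≤ 1`): (i) `E_{(θ,h)(ν,h)} = ± E_{(ν,h)(θ,h)}`; (ii) both
`E_{(θ,h)(ν,h)}` and `E_{(θ,h)}` belong to `ℰ_{1/8, h_min⁻¹}`. -/
theorem Epair_symm_and_class
    (hMin : ℝ) (hMin0 : 0 < hMin) (hMin1 : hMin ≤ 1)
    (θ : Fin 2 → ℝ) (hθ : θ ∈ S1) (ν : Fin 2 → ℝ) (hν : ν ∈ S1)
    (h : ℝ) (hhl : hMin ≤ h) (hh1 : h ≤ 1) :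
    (Epair θ ν h = Epair ν θ h ∨ Epair θ ν h = -Epair ν θ h) ∧
    Epair θ ν h ∈ Ecal (1/8) hMin⁻¹ ∧
    Emat θ h ∈ Ecal (1/8) hMin⁻¹ := by
  have h0 : 0 < h := lt_of_lt_of_le hMin0 hhl
  have hsym : dot2 θ ν = dot2 ν θ := by simp [dot2]; ring
  refine ⟨?_, ?_, ?_⟩
  · -- symmetry
    by_cases hd : 0 ≤ dot2 ν θ
    · left
      simp only [Epair, hsym, if_pos hd]
      ext i j
      fin_cases i <;> fin_cases j <;>
        simp [Ebar, hsym] <;> ring_nf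
    · right
      simp only [Epair, hsym, if_neg hd]
      have h1 : |dot2 ν (-θ)| = |dot2 θ (-ν)| := by
        simp [dot2]; ring_nf
      ext i j
      fin_cases i <;> fin_cases j <;>
        simp [Ebar, dot2, Pi.neg_apply] <;> ring_nf <;>
        rw [show -(ν 0 * θ 0) - ν 1 * θ 1 = -(θ 0 * ν 0) - θ 1 * ν 1 by ring] <;> ring
  · -- Epair ∈ Ecal
    by_cases hd : 0 ≤ dot2 ν θ
    · simp only [Epair, if_pos hd]
      exact Ebar_mem hMin0 hθ hν hhl hh1 hd
    · simp only [Epair, if_neg hd]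
      have hd' : 0 ≤ dot2 ν (-θ) := by
        simp only [dot2, Pi.neg_apply] at *
        nlinarith
      exact Ebar_mem hMin0 (neg_mem_S1 hθ) hν hhl hh1 hd'
  · -- Emat ∈ Ecal
    have hS := hθ
    simp only [S1, Set.mem_setOf_eq] at hS
    have hdet : (Emat θ h).det = 1 / h := by
      simp only [Emat, Matrix.det_fin_two_of]
      field_simp
      nlinarith
    have hθ0 := abs_le_one_of_S1 hθ 0
    have hθ1 := abs_le_one_of_S1 hθ 1
    have hh1' : (1:ℝ) ≤ 1 / h := by rw [le_div_iff₀ h0]; linarith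
    constructor
    · rw [hdet, abs_of_pos (by positivity)]
      rw [div_le_iff₀ h0, inv_eq_one_div, div_mul_eq_mul_div, le_div_iff₀ hMin0]
      nlinarith
    · intro i j
      rw [sqrt_quarter, hdet, abs_of_pos (by positivity : (0:ℝ) < 1/h)]
      fin_cases i <;> fin_cases j
      · show |θ 0 / h| ≤ _
        rw [abs_div, abs_of_pos h0, mul_one_div, div_le_div_iff₀ h0 h0]
        nlinarith
      · show |θ 1 / h| ≤ _
        rw [abs_div, abs_of_pos h0, mul_one_div, div_le_div_iff₀ h0 h0]
        nlinarith
      · show |-θ 1| ≤ _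
        rw [abs_neg]
        linarith
      · show |θ 0| ≤ _
        linarith

end SingleIndex
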